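/- arXiv:1701.01669 — 3 statements merged into one kernel-verified Lean document; each statement's English description precedes it below -/
import Mathlib

section
/- The pair of functions x(t) = exp(-(r+q)t + (q/p)(1 - e^{-pt})) · (1 + r ∫₀ᵗ exp((r+q)τ - (q/p)(1 - e^{-pτ})) dτ) together with y(t) = -x'(t)/q solves the system x' = -q y, y' = p e^{-pt} x + (q e^{-pt} - q - r) y with x(0) = 1, y(0) = 0. -/
theorem stmt_4 (p q r : ℝ) (hp : 0 < p) (hq : 0 < q) (hr : 0 < r)
    (x y : ℝ → ℝ)
    (hx : ∀ t, x t = Real.exp (-(r + q) * t + (q / p) * (1 - Real.exp (-p * t))) *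
        (1 + r * ∫ τ in (0:ℝ)..t,
          Real.exp ((r + q) * τ - (q / p) * (1 - Real.exp (-p * τ)))))
    (hy : ∀ t, y t = -(deriv x t) / q) :
    x 0 = 1 ∧ y 0 = 0 ∧
    (∀ t, HasDerivAt x (-q * y t) t) ∧
    (∀ t, HasDerivAt y
      (p * Real.exp (-p * t) * x t + (q * Real.exp (-p * t) - q - r) * y t) t) := by
  have hq0 : q ≠ 0 := ne_of_gt hq
  have hp0 : p ≠ 0 := ne_of_gt hp
  set g : ℝ → ℝ := fun τ => Real.exp ((r + q) * τ - (q / p) * (1 - Real.exp (-p * τ))) with hg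
  have hgc : Continuous g := by
    apply Real.continuous_exp.comp
    fun_prop
  have hE : ∀ t : ℝ, HasDerivAt (fun t : ℝ => Real.exp (-p * t))
      (Real.exp (-p * t) * (-p)) t := by
    intro t
    have h : HasDerivAt (fun y : ℝ => -p * y) (-p * 1) t := (hasDerivAt_id t).const_mul (-p)
    simpa using h.exp
  -- derivative of x
  have hx' : ∀ t, HasDerivAt x ((q * Real.exp (-p * t) - q - r) * x t + r) t := by
    intro t
    have hxf : x = fun t => Real.exp (-(r + q) * t + (q / p) * (1 - Real.exp (-p * t))) *
        (1 + r * ∫ τ in (0:ℝ)..t, g τ) := funext hx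
    have hA : HasDerivAt (fun t : ℝ => -(r + q) * t + (q / p) * (1 - Real.exp (-p * t)))
        (q * Real.exp (-p * t) - q - r) t := by
      have h1 : HasDerivAt (fun y : ℝ => -(r + q) * y) (-(r + q) * 1) t :=
        (hasDerivAt_id t).const_mul (-(r + q))
      have h2 : HasDerivAt (fun y : ℝ => (q / p) * (1 - Real.exp (-p * y)))
          ((q / p) * (0 - Real.exp (-p * t) * (-p))) t :=
        ((hasDerivAt_const t (1:ℝ)).sub (hE t)).const_mul (q / p)
      refine (h1.add h2).congr_deriv ?_
      field_simp
      ring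
    have hExp := hA.exp
    have hInt : HasDerivAt (fun u : ℝ => ∫ τ in (0:ℝ)..u, g τ) (g t) t :=
      intervalIntegral.integral_hasDerivAt_right (hgc.intervalIntegrable 0 t)
        (hgc.stronglyMeasurableAtFilter _ _) hgc.continuousAt
    have hF : HasDerivAt (fun u : ℝ => 1 + r * ∫ τ in (0:ℝ)..u, g τ) (r * g t) t :=
      ((hInt.const_mul r).const_add 1)
    have htot := hExp.mul hF
    simp only [Pi.mul_def] at htot
    rw [← hxf] at htot
    have h1 : Real.exp (-(r + q) * t + (q / p) * (1 - Real.exp (-p * t))) * g t = 1 := by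
      rw [hg, ← Real.exp_add]
      ring_nf
      exact Real.exp_zero
    refine htot.congr_deriv (Eq.symm ?_)
    rw [hx t]
    linear_combination (-r) * h1
  have hx0 : x 0 = 1 := by rw [hx 0]; simp
  have hyval : ∀ t, y t = -((q * Real.exp (-p * t) - q - r) * x t + r) / q := by
    intro t; rw [hy t, (hx' t).deriv]
  have hxy : ∀ t, HasDerivAt x (-q * y t) t := by
    intro t
    have h := hx' t
    rw [hyval t]
    convert h using 1
    field_simp
  refine ⟨hx0, ?_, hxy, ?_⟩
  · rw [hyval 0, hx0]; norm_num
  · intro t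
    have hyf : y = fun t => -((q * Real.exp (-p * t) - q - r) * x t + r) / q := funext hyval
    have hc : HasDerivAt (fun t : ℝ => q * Real.exp (-p * t) - q - r)
        (q * (Real.exp (-p * t) * (-p))) t :=
      (((hE t).const_mul q).sub_const q).sub_const r
    have hprod := (hc.mul (hx' t)).add_const r
    have hyder : HasDerivAt y
        (-(q * (Real.exp (-p * t) * (-p)) * x t +
          (q * Real.exp (-p * t) - q - r) * ((q * Real.exp (-p * t) - q - r) * x t + r)) / q) t := by
      rw [hyf]
      exact (hprod.neg.div_const q)
    convert hyder using 1
    rw [hyval t]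
    field_simp
    ring
end

section
/- If x, y solve x' = -q y, y' = p e^{-pt} x + (q e^{-pt} - q - r) y with x(0) = 1, y(0) = 0, then x satisfies the first-order linear ODE x' = -(r+q)x + q e^{-pt} x + r. -/
theorem stmt_5 (p q r : ℝ) (hp : 0 < p) (hq : 0 < q) (hr : 0 < r)
    (x y : ℝ → ℝ)
    (hx : ∀ t, HasDerivAt x (-q * y t) t)
    (hy : ∀ t, HasDerivAt y
      (p * Real.exp (-p * t) * x t + (q * Real.exp (-p * t) - q - r) * y t) t)
    (hx0 : x 0 = 1) (hy0 : y 0 = 0) :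
    ∀ t, HasDerivAt x (-(r + q) * x t + q * Real.exp (-p * t) * x t + r) t := by
  set g : ℝ → ℝ := fun t => -q * y t + (r + q) * x t - q * (Real.exp (-p * t) * x t) - r with hgdef
  have he : ∀ t : ℝ, HasDerivAt (fun s : ℝ => Real.exp (-p * s)) (-p * Real.exp (-p * t)) t := by
    intro t
    simpa [Function.comp_def, mul_comm] using (Real.hasDerivAt_exp (-p * t)).comp t
      ((hasDerivAt_id t).const_mul (-p)) |>.congr_deriv rfl
  have hg : ∀ t, HasDerivAt g 0 t := by
    intro t
    have h1 := hx t
    have h2 := hy t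
    have h3 : HasDerivAt g
        (-q * (p * Real.exp (-p * t) * x t + (q * Real.exp (-p * t) - q - r) * y t)
          + (r + q) * (-q * y t)
          - q * ((-p * Real.exp (-p * t)) * x t + Real.exp (-p * t) * (-q * y t))) t := by
      exact (((h2.const_mul (-q)).add (h1.const_mul (r + q))).sub
        ((((he t).mul h1).const_mul q))).sub_const r
    convert h3 using 1
    ring
  have hconst : ∀ t : ℝ, g t = g 0 := by
    have hd : Differentiable ℝ g := fun t => (hg t).differentiableAt
    intro t
    exact is_const_of_deriv_eq_zero hd (fun s => (hg s).deriv) t 0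
  intro t
  have h0 : g 0 = 0 := by simp [hgdef, hx0, hy0]
  have ht : -q * y t = -(r + q) * x t + q * Real.exp (-p * t) * x t + r := by
    have := hconst t
    rw [h0] at this
    simp only [hgdef] at this
    linarith
  have := hx t
  rwa [ht] at this
end

section
/- The two expressions for the one-sided 1D adoption curve are equal: for all t ≥ 0, 1 - e^{-(r+q+p)t + (q/p)(1 - e^{-pt})} (1 + r ∫₀ᵗ e^{(r+q)τ - (q/p)(1 - e^{-pτ})} dτ) = 1 - e^{-pt} + e^{-pt - g(t)} q ∫₀ᵗ e^{-r(t-τ)} e^{g(τ)} (1 - e^{-pτ}) dτ, where g(t) = qt - (q/p)(1 - e^{-pt}). -/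
theorem stmt_6 (p q r : ℝ) (hp : 0 < p) (hq : 0 < q) (hr : 0 < r)
    (g : ℝ → ℝ) (hg : ∀ t, g t = q * t - (q / p) * (1 - Real.exp (-p * t))) :
    ∀ t, 0 ≤ t →
      1 - Real.exp (-(r + q + p) * t + (q / p) * (1 - Real.exp (-p * t))) *
          (1 + r * ∫ τ in (0:ℝ)..t,
            Real.exp ((r + q) * τ - (q / p) * (1 - Real.exp (-p * τ)))) =
      1 - Real.exp (-p * t) + Real.exp (-p * t - g t) * q *
          ∫ τ in (0:ℝ)..t,
            Real.exp (-r * (t - τ)) * Real.exp (g τ) * (1 - Real.exp (-p * τ)) := by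
  intro t ht
  set G : ℝ → ℝ := fun τ => (r + q) * τ - q / p * (1 - Real.exp (-p * τ)) with hGdef
  have hderiv : ∀ τ : ℝ, HasDerivAt (fun s => Real.exp (G s))
      (Real.exp (G τ) * (r + q * (1 - Real.exp (-p * τ)))) τ := by
    intro τ
    have he : HasDerivAt (fun s : ℝ => Real.exp (-p * s)) (Real.exp (-p * τ) * (-p)) τ := by
      have := ((hasDerivAt_id τ).const_mul (-p)).exp
      simpa [mul_comm] using this
    have h1 : HasDerivAt G ((r + q) - q / p * (0 - Real.exp (-p * τ) * (-p))) τ := by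
      have hlin : HasDerivAt (fun s : ℝ => (r + q) * s) (r + q) τ := by
        simpa using (hasDerivAt_id τ).const_mul (r + q)
      have h2 : HasDerivAt (fun s : ℝ => 1 - Real.exp (-p * s)) (0 - Real.exp (-p * τ) * (-p)) τ :=
        (hasDerivAt_const τ (1 : ℝ)).sub he
      exact hlin.sub (h2.const_mul (q / p))
    have := h1.exp
    convert this using 1
    field_simp
    ring
  have hcont : Continuous fun τ => Real.exp (G τ) := by
    apply Real.continuous_exp.comp
    fun_prop
  have hint1 : IntervalIntegrable (fun τ => Real.exp (G τ)) MeasureTheory.volume 0 t :=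
    hcont.intervalIntegrable 0 t
  have hint2 : IntervalIntegrable (fun τ => Real.exp (G τ) * (1 - Real.exp (-p * τ)))
      MeasureTheory.volume 0 t := by
    apply Continuous.intervalIntegrable
    fun_prop
  set A : ℝ := ∫ τ in (0:ℝ)..t, Real.exp (G τ) with hA
  set B : ℝ := ∫ τ in (0:ℝ)..t, Real.exp (G τ) * (1 - Real.exp (-p * τ)) with hB
  have hkey : Real.exp (G t) = 1 + r * A + q * B := by
    have hsub : (∫ τ in (0:ℝ)..t, Real.exp (G τ) * (r + q * (1 - Real.exp (-p * τ))))
        = Real.exp (G t) - Real.exp (G 0) := by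
      apply intervalIntegral.integral_eq_sub_of_hasDerivAt
      · intro τ _; exact hderiv τ
      · apply Continuous.intervalIntegrable
        apply hcont.mul
        fun_prop
    have hsplit : (∫ τ in (0:ℝ)..t, Real.exp (G τ) * (r + q * (1 - Real.exp (-p * τ))))
        = r * A + q * B := by
      have : ∀ τ : ℝ, Real.exp (G τ) * (r + q * (1 - Real.exp (-p * τ)))
          = r * Real.exp (G τ) + q * (Real.exp (G τ) * (1 - Real.exp (-p * τ))) := by
        intro τ; ring
      rw [intervalIntegral.integral_congr (fun τ _ => this τ)]
      rw [intervalIntegral.integral_add (hint1.const_mul r) (hint2.const_mul q),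
        intervalIntegral.integral_const_mul, intervalIntegral.integral_const_mul]
    have hG0 : G 0 = 0 := by simp [hGdef]
    rw [hsplit, hG0, Real.exp_zero] at hsub
    linarith
  have hR : (∫ τ in (0:ℝ)..t, Real.exp (-r * (t - τ)) * Real.exp (g τ) * (1 - Real.exp (-p * τ)))
      = Real.exp (-r * t) * B := by
    rw [hB, ← intervalIntegral.integral_const_mul]
    apply intervalIntegral.integral_congr
    intro τ _
    simp only [hg, hGdef]
    rw [← mul_assoc, ← Real.exp_add, ← Real.exp_add]
    congr 2
    ring
  rw [hR]
  have hE1 : Real.exp (-(r + q + p) * t + q / p * (1 - Real.exp (-p * t))) * Real.exp (G t)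
      = Real.exp (-p * t) := by
    rw [← Real.exp_add]; congr 1; simp only [hGdef]; ring
  have hE2 : Real.exp (-(r + q + p) * t + q / p * (1 - Real.exp (-p * t)))
      = Real.exp (-p * t - g t) * Real.exp (-r * t) := by
    rw [hg, ← Real.exp_add]; congr 1; ring
  linear_combination Real.exp (-(r + q + p) * t + q / p * (1 - Real.exp (-p * t))) * hkey
    - hE1 + q * B * hE2
end
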